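/- (Uniform gradient deviation bound used in the matrix sensing application.) Let Y and M be N×N real symmetric matrices and set Δ = Y − M. Then for every X ∈ St(N,r), ‖grad f(X) − grad g(X)‖_F = ‖(X Xᵀ − I_N) Δ X N_r − (1/2) X Xᵀ Δ X N_r + (1/2) X N_r Xᵀ Δ X‖_F ≤ (3/2) r^{3/2} ‖Y − M‖, where ‖·‖ denotes the spectral norm and ‖·‖_F the Frobenius norm. -/

import Mathlib

open Matrix

/-- The diagonal weight matrix `N_r = diag(r, r−1, …, 1)`. -/
noncomputable def Nr (r : ℕ) : Matrix (Fin r) (Fin r) ℝ :=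
  Matrix.diagonal fun j => (r : ℝ) - (j : ℕ)

/-- The Frobenius norm. -/
noncomputable def frob {m n : ℕ} (A : Matrix (Fin m) (Fin n) ℝ) : ℝ :=
  Real.sqrt (∑ i, ∑ j, A i j ^ 2)

/-- The spectral norm (ℓ₂ operator norm) of a square matrix. -/
noncomputable def spec {N : ℕ} (A : Matrix (Fin N) (Fin N) ℝ) : ℝ :=
  ‖LinearMap.toContinuousLinearMap (Matrix.toEuclideanLin A)‖

/-- The Riemannian gradient `grad g(X) = (X Xᵀ − I) M X N_r − (1/2) X [Xᵀ M X, N_r]`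
of `g(X) = −(1/2) tr(Xᵀ M X N_r)`. -/
noncomputable def gradRisk {N r : ℕ} (M : Matrix (Fin N) (Fin N) ℝ)
    (X : Matrix (Fin N) (Fin r) ℝ) : Matrix (Fin N) (Fin r) ℝ :=
  (X * Xᵀ - 1) * M * X * Nr r
    - (1/2 : ℝ) • (X * (Xᵀ * M * X * Nr r - Nr r * (Xᵀ * M * X)))

/-! ### Auxiliary material -/

/-- Euclidean norm of a vector. -/
noncomputable def en {n : ℕ} (v : Fin n → ℝ) : ℝ := Real.sqrt (∑ i, v i ^ 2)

lemma en_nonneg {n : ℕ} (v : Fin n → ℝ) : 0 ≤ en v := Real.sqrt_nonneg _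

lemma sq_en {n : ℕ} (v : Fin n → ℝ) : en v ^ 2 = ∑ i, v i ^ 2 :=
  Real.sq_sqrt (by positivity)

lemma en_dot {n : ℕ} (v : Fin n → ℝ) : v ⬝ᵥ v = en v ^ 2 := by
  rw [sq_en]; simp [dotProduct, sq]

lemma en_eq {n : ℕ} (v : Fin n → ℝ) :
    en v = ‖(WithLp.equiv 2 (Fin n → ℝ)).symm v‖ := by
  rw [EuclideanSpace.norm_eq, en]
  congr 1; apply Finset.sum_congr rfl; intro i _
  simp [Real.norm_eq_abs, sq_abs]

lemma spec_nonneg {N : ℕ} (A : Matrix (Fin N) (Fin N) ℝ) : 0 ≤ spec A := norm_nonneg _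

lemma en_mulVec_le {N : ℕ} (A : Matrix (Fin N) (Fin N) ℝ) (v : Fin N → ℝ) :
    en (A.mulVec v) ≤ spec A * en v := by
  have h := (LinearMap.toContinuousLinearMap (Matrix.toEuclideanLin A)).le_opNorm
    ((WithLp.equiv 2 (Fin N → ℝ)).symm v)
  rw [en_eq, en_eq]
  simp only [LinearMap.coe_toContinuousLinearMap',
    WithLp.equiv_symm_apply, Matrix.toEuclideanLin_apply_piLp_toLp] at h
  exact h

lemma spec_le_of_bound {N : ℕ} (A : Matrix (Fin N) (Fin N) ℝ) (c : ℝ) (hc : 0 ≤ c)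
    (h : ∀ v, en (A.mulVec v) ≤ c * en v) : spec A ≤ c := by
  apply ContinuousLinearMap.opNorm_le_bound _ hc
  intro x
  have := h ((WithLp.equiv 2 (Fin N → ℝ)) x)
  rw [en_eq, en_eq] at this
  simp only [LinearMap.coe_toContinuousLinearMap'] at *
  rw [show ((WithLp.equiv 2 (Fin N → ℝ)).symm ((WithLp.equiv 2 (Fin N → ℝ)) x)) = x from
    (WithLp.equiv 2 (Fin N → ℝ)).symm_apply_apply x] at this
  rw [show Matrix.toEuclideanLin A x
      = (WithLp.equiv 2 (Fin N → ℝ)).symm (A.mulVec ((WithLp.equiv 2 (Fin N → ℝ)) x)) from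
    Matrix.toEuclideanLin_apply A x]
  exact this

lemma frob_nonneg {m n : ℕ} (A : Matrix (Fin m) (Fin n) ℝ) : 0 ≤ frob A := Real.sqrt_nonneg _

lemma frob_eq_norm {m n : ℕ} (A : Matrix (Fin m) (Fin n) ℝ) :
    frob A = ‖(WithLp.equiv 2 (Fin m × Fin n → ℝ)).symm (fun p => A p.1 p.2)‖ := by
  rw [EuclideanSpace.norm_eq, frob]
  congr 1
  rw [Fintype.sum_prod_type]
  simp [Real.norm_eq_abs, sq_abs]

lemma frob_add_le {m n : ℕ} (A B : Matrix (Fin m) (Fin n) ℝ) :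
    frob (A + B) ≤ frob A + frob B := by
  rw [frob_eq_norm, frob_eq_norm, frob_eq_norm]
  have : ((WithLp.equiv 2 (Fin m × Fin n → ℝ)).symm (fun p => (A + B) p.1 p.2)) =
      ((WithLp.equiv 2 (Fin m × Fin n → ℝ)).symm (fun p => A p.1 p.2))
      + ((WithLp.equiv 2 (Fin m × Fin n → ℝ)).symm (fun p => B p.1 p.2)) := rfl
  rw [this]; exact norm_add_le _ _

lemma frob_smul {m n : ℕ} (c : ℝ) (A : Matrix (Fin m) (Fin n) ℝ) :
    frob (c • A) = |c| * frob A := by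
  rw [frob, frob]
  have : ∀ i j, (c • A) i j ^ 2 = c^2 * A i j ^2 := by intro i j; simp [mul_pow]
  simp only [this, ← Finset.mul_sum]
  rw [Real.sqrt_mul (sq_nonneg c), Real.sqrt_sq_eq_abs]

lemma sq_frob {m n : ℕ} (A : Matrix (Fin m) (Fin n) ℝ) : frob A ^ 2 = ∑ i, ∑ j, A i j ^ 2 :=
  Real.sq_sqrt (by positivity)

lemma frob_sq_cols {m n : ℕ} (A : Matrix (Fin m) (Fin n) ℝ) :
    frob A ^ 2 = ∑ j, en (fun i => A i j) ^ 2 := by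
  rw [sq_frob, Finset.sum_comm]
  exact Finset.sum_congr rfl fun j _ => (sq_en _).symm

lemma frob_mul_le_spec {N r : ℕ} (A : Matrix (Fin N) (Fin N) ℝ)
    (B : Matrix (Fin N) (Fin r) ℝ) :
    frob (A * B) ≤ spec A * frob B := by
  have h0 : 0 ≤ spec A := spec_nonneg _
  have hsq : frob (A * B) ^ 2 ≤ (spec A * frob B) ^ 2 := by
    rw [frob_sq_cols, mul_pow, frob_sq_cols, Finset.mul_sum]
    apply Finset.sum_le_sum
    intro j _
    have hcol : (fun i => (A * B) i j) = A.mulVec (fun i => B i j) := by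
      funext i; simp [Matrix.mul_apply, Matrix.mulVec, dotProduct]
    rw [hcol]
    calc en (A.mulVec fun i => B i j) ^ 2 ≤ (spec A * en fun i => B i j) ^ 2 := by
          apply pow_le_pow_left₀ (en_nonneg _) (en_mulVec_le _ _)
      _ = spec A ^ 2 * en (fun i => B i j) ^2 := by ring
  exact (pow_le_pow_iff_left₀ (frob_nonneg _) (mul_nonneg h0 (frob_nonneg _)) two_ne_zero).mp hsq

lemma frob_mul_Nr {N r : ℕ} (A : Matrix (Fin N) (Fin r) ℝ) :
    frob (A * Nr r) ≤ (r : ℝ) * frob A := by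
  have hsq : frob (A * Nr r) ^ 2 ≤ ((r : ℝ) * frob A) ^ 2 := by
    rw [sq_frob, mul_pow, sq_frob, Finset.mul_sum]
    apply Finset.sum_le_sum
    intro i _
    rw [Finset.mul_sum]
    apply Finset.sum_le_sum
    intro j _
    have : (A * Nr r) i j = A i j * ((r : ℝ) - (j : ℕ)) := by
      simp [Nr, Matrix.mul_diagonal]
    rw [this, mul_pow]
    have hj : ((r : ℝ) - (j : ℕ)) ^ 2 ≤ (r : ℝ) ^ 2 := by
      have h1 : (0 : ℝ) ≤ (r : ℝ) - (j : ℕ) := by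
        have := j.2
        have : ((j : ℕ) : ℝ) < (r : ℝ) := by exact_mod_cast this
        linarith
      have h2 : (r : ℝ) - (j : ℕ) ≤ (r : ℝ) := by
        have : (0:ℝ) ≤ ((j : ℕ) : ℝ) := Nat.cast_nonneg _
        linarith
      nlinarith
    nlinarith [sq_nonneg (A i j)]
  exact (pow_le_pow_iff_left₀ (frob_nonneg _)
    (mul_nonneg (Nat.cast_nonneg r) (frob_nonneg _)) two_ne_zero).mp hsq

lemma frob_X {N r : ℕ} (X : Matrix (Fin N) (Fin r) ℝ) (hX : Xᵀ * X = 1) :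
    frob X = Real.sqrt r := by
  rw [frob]
  congr 1
  have : ∀ j, (∑ i, X i j ^ 2) = (Xᵀ * X) j j := by
    intro j; simp [Matrix.mul_apply, sq]
  calc ∑ i, ∑ j, X i j ^ 2 = ∑ j, ∑ i, X i j ^ 2 := Finset.sum_comm
    _ = ∑ j : Fin r, (Xᵀ * X) j j := Finset.sum_congr rfl fun j _ => this j
    _ = ∑ j : Fin r, (1 : ℝ) := by rw [hX]; simp [Matrix.one_apply]
    _ = r := by simp

lemma dot_le {n : ℕ} (v w : Fin n → ℝ) : v ⬝ᵥ w ≤ en v * en w := by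
  have h := Finset.sum_mul_sq_le_sq_mul_sq Finset.univ v w
  have h2 : (v ⬝ᵥ w) ^ 2 ≤ (en v * en w) ^ 2 := by
    rw [mul_pow, sq_en, sq_en]; exact h
  calc v ⬝ᵥ w ≤ |v ⬝ᵥ w| := le_abs_self _
    _ = Real.sqrt ((v ⬝ᵥ w) ^ 2) := (Real.sqrt_sq_eq_abs _).symm
    _ ≤ Real.sqrt ((en v * en w) ^ 2) := Real.sqrt_le_sqrt h2
    _ = |en v * en w| := Real.sqrt_sq_eq_abs _
    _ = en v * en w := abs_of_nonneg (mul_nonneg (en_nonneg _) (en_nonneg _))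

lemma dot_X {N r : ℕ} (X : Matrix (Fin N) (Fin r) ℝ) (hX : Xᵀ * X = 1)
    (w : Fin r → ℝ) : (X *ᵥ w) ⬝ᵥ (X *ᵥ w) = w ⬝ᵥ w := by
  rw [Matrix.dotProduct_mulVec, ← Matrix.mulVec_transpose, Matrix.mulVec_mulVec, hX,
    Matrix.one_mulVec]

lemma en_X_mulVec {N r : ℕ} (X : Matrix (Fin N) (Fin r) ℝ) (hX : Xᵀ * X = 1)
    (w : Fin r → ℝ) : en (X *ᵥ w) = en w := by
  have h := dot_X X hX w
  rw [en_dot, en_dot] at h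
  exact (pow_left_inj₀ (en_nonneg _) (en_nonneg _) two_ne_zero).mp h

lemma dot_P {N r : ℕ} (X : Matrix (Fin N) (Fin r) ℝ) (v : Fin N → ℝ) :
    (X *ᵥ (Xᵀ *ᵥ v)) ⬝ᵥ v = (Xᵀ *ᵥ v) ⬝ᵥ (Xᵀ *ᵥ v) := by
  calc (X *ᵥ (Xᵀ *ᵥ v)) ⬝ᵥ v = v ⬝ᵥ (X *ᵥ (Xᵀ *ᵥ v)) := dotProduct_comm _ _
    _ = (v ᵥ* X) ⬝ᵥ (Xᵀ *ᵥ v) := Matrix.dotProduct_mulVec _ _ _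
    _ = (Xᵀ *ᵥ v) ⬝ᵥ (Xᵀ *ᵥ v) := by rw [← Matrix.mulVec_transpose]

lemma en_Xt_mulVec {N r : ℕ} (X : Matrix (Fin N) (Fin r) ℝ) (hX : Xᵀ * X = 1)
    (v : Fin N → ℝ) : en (Xᵀ *ᵥ v) ≤ en v := by
  have h : (Xᵀ *ᵥ v) ⬝ᵥ (Xᵀ *ᵥ v) = (X *ᵥ (Xᵀ *ᵥ v)) ⬝ᵥ v := (dot_P X v).symm
  set u := Xᵀ *ᵥ v with hu
  have h2 : en u ^ 2 ≤ en u * en v := by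
    rw [← en_dot, h]
    calc (X *ᵥ u) ⬝ᵥ v ≤ en (X *ᵥ u) * en v := dot_le _ _
      _ = en u * en v := by rw [en_X_mulVec X hX]
  rcases eq_or_lt_of_le (en_nonneg u) with h0 | h0
  · rw [← h0]; exact en_nonneg v
  · exact (mul_le_mul_iff_right₀ h0).mp (by rw [← sq] at *; linarith [h2])

lemma en_Nr_mulVec {r : ℕ} (u : Fin r → ℝ) :
    en (Nr r *ᵥ u) ≤ (r : ℝ) * en u := by
  have hsq : en (Nr r *ᵥ u) ^ 2 ≤ ((r : ℝ) * en u) ^ 2 := by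
    rw [sq_en, mul_pow, sq_en, Finset.mul_sum]
    apply Finset.sum_le_sum
    intro j _
    have : (Nr r *ᵥ u) j = ((r : ℝ) - (j : ℕ)) * u j := by
      simp [Nr, Matrix.mulVec_diagonal]
    rw [this, mul_pow]
    have h1 : (0 : ℝ) ≤ (r : ℝ) - (j : ℕ) := by
      have : ((j : ℕ) : ℝ) < (r : ℝ) := by exact_mod_cast j.2
      linarith
    have h2 : (r : ℝ) - (j : ℕ) ≤ (r : ℝ) := by
      have : (0:ℝ) ≤ ((j : ℕ) : ℝ) := Nat.cast_nonneg _
      linarith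
    have h3 : ((r : ℝ) - (j : ℕ)) ^ 2 ≤ (r : ℝ) ^ 2 := by nlinarith
    exact mul_le_mul_of_nonneg_right h3 (sq_nonneg _)
  exact (pow_le_pow_iff_left₀ (en_nonneg _)
    (mul_nonneg (Nat.cast_nonneg r) (en_nonneg _)) two_ne_zero).mp hsq

/-- The spectral norm of `(1/2) X Xᵀ − I` is at most 1. -/
lemma spec_Q_le {N r : ℕ} (X : Matrix (Fin N) (Fin r) ℝ) (hX : Xᵀ * X = 1) :
    spec ((1/2 : ℝ) • (X * Xᵀ) - 1) ≤ 1 := by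
  apply spec_le_of_bound _ _ zero_le_one
  intro v
  rw [one_mul]
  set u := Xᵀ *ᵥ v with hu
  have hQv : ((1/2 : ℝ) • (X * Xᵀ) - 1).mulVec v = (1/2 : ℝ) • (X *ᵥ u) - v := by
    rw [Matrix.sub_mulVec, Matrix.smul_mulVec, Matrix.one_mulVec, hu,
      ← Matrix.mulVec_mulVec]
  have ht : (X *ᵥ u) ⬝ᵥ v = u ⬝ᵥ u := by rw [hu]; exact dot_P X v
  have htt : (X *ᵥ u) ⬝ᵥ (X *ᵥ u) = u ⬝ᵥ u := dot_X X hX u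
  have ht0 : 0 ≤ u ⬝ᵥ u := by rw [en_dot]; positivity
  have hsq : en (((1/2 : ℝ) • (X * Xᵀ) - 1).mulVec v) ^ 2 ≤ en v ^ 2 := by
    rw [hQv, ← en_dot, ← en_dot]
    have expand : ((1/2 : ℝ) • (X *ᵥ u) - v) ⬝ᵥ ((1/2 : ℝ) • (X *ᵥ u) - v)
        = (1/4 : ℝ) * ((X *ᵥ u) ⬝ᵥ (X *ᵥ u)) - ((X *ᵥ u) ⬝ᵥ v) + v ⬝ᵥ v := by
      have hc : v ⬝ᵥ (X *ᵥ u) = (X *ᵥ u) ⬝ᵥ v := dotProduct_comm _ _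
      simp only [sub_dotProduct, dotProduct_sub, smul_dotProduct,
        dotProduct_smul, smul_eq_mul, hc]
      ring
    rw [expand, htt, ht]
    linarith
  exact (pow_le_pow_iff_left₀ (en_nonneg _) (en_nonneg _) two_ne_zero).mp hsq

/-- The spectral norm of `X N_r Xᵀ` is at most `r`. -/
lemma spec_XNrXt_le {N r : ℕ} (X : Matrix (Fin N) (Fin r) ℝ) (hX : Xᵀ * X = 1) :
    spec (X * Nr r * Xᵀ) ≤ (r : ℝ) := by
  apply spec_le_of_bound _ _ (Nat.cast_nonneg r)
  intro v
  have hmv : (X * Nr r * Xᵀ).mulVec v = X *ᵥ (Nr r *ᵥ (Xᵀ *ᵥ v)) := by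
    rw [Matrix.mulVec_mulVec, Matrix.mulVec_mulVec]
  rw [hmv, en_X_mulVec X hX]
  calc en (Nr r *ᵥ (Xᵀ *ᵥ v)) ≤ (r : ℝ) * en (Xᵀ *ᵥ v) := en_Nr_mulVec _
    _ ≤ (r : ℝ) * en v := by
        apply mul_le_mul_of_nonneg_left (en_Xt_mulVec X hX v) (Nat.cast_nonneg r)

lemma rpow_three_halves (r : ℕ) : (r : ℝ) ^ ((3 : ℝ)/2) = (r : ℝ) * Real.sqrt r := by
  rw [show (3 : ℝ)/2 = 1 + 1/2 by norm_num,
    Real.rpow_add' (Nat.cast_nonneg r) (by norm_num), Real.rpow_one,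
    ← Real.sqrt_eq_rpow]

/-- uniform gradient deviation bound, matrix sensing: for symmetric
`Y`, `M`, `Δ = Y − M`, and every `X ∈ St(N,r)`,
`‖grad f(X) − grad g(X)‖_F = ‖(X Xᵀ − I) Δ X N_r − (1/2) X Xᵀ Δ X N_r + (1/2) X N_r Xᵀ Δ X‖_F
  ≤ (3/2) r^{3/2} ‖Y − M‖` (spectral norm). -/
theorem stmt_15 {N r : ℕ} (Y M : Matrix (Fin N) (Fin N) ℝ)
    (hY : Y.IsSymm) (hM : M.IsSymm)
    (X : Matrix (Fin N) (Fin r) ℝ) (hX : Xᵀ * X = 1) :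
    gradRisk Y X - gradRisk M X =
      (X * Xᵀ - 1) * (Y - M) * X * Nr r
        - (1/2 : ℝ) • (X * Xᵀ * (Y - M) * X * Nr r)
        + (1/2 : ℝ) • (X * Nr r * Xᵀ * (Y - M) * X) ∧
    frob (gradRisk Y X - gradRisk M X) ≤
      (3/2 : ℝ) * (r : ℝ) ^ ((3 : ℝ)/2) * spec (Y - M) := by
  have heq : gradRisk Y X - gradRisk M X =
      (X * Xᵀ - 1) * (Y - M) * X * Nr r
        - (1/2 : ℝ) • (X * Xᵀ * (Y - M) * X * Nr r)
        + (1/2 : ℝ) • (X * Nr r * Xᵀ * (Y - M) * X) := by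
    simp only [gradRisk, Matrix.mul_sub, Matrix.sub_mul, Matrix.mul_add, Matrix.add_mul,
      smul_sub, smul_add, Matrix.one_mul, Matrix.mul_one, Matrix.mul_assoc]
    module
  refine ⟨heq, ?_⟩
  have hre : gradRisk Y X - gradRisk M X =
      (((1/2 : ℝ) • (X * Xᵀ) - 1) * (Y - M) * X) * Nr r
        + (1/2 : ℝ) • ((X * Nr r * Xᵀ) * (Y - M) * X) := by
    rw [heq]
    simp only [Matrix.mul_sub, Matrix.sub_mul, Matrix.mul_add, Matrix.add_mul,
      smul_sub, smul_add, Matrix.smul_mul, Matrix.one_mul, Matrix.mul_one, Matrix.mul_assoc]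
    module
  set s := spec (Y - M) with hs
  have hs0 : 0 ≤ s := spec_nonneg _
  have hQ := spec_Q_le X hX
  have hfX : frob ((Y - M) * X) ≤ s * Real.sqrt r := by
    calc frob ((Y - M) * X) ≤ spec (Y - M) * frob X := frob_mul_le_spec _ _
      _ = s * Real.sqrt r := by rw [frob_X X hX, hs]
  have hsr : 0 ≤ s * Real.sqrt r := mul_nonneg hs0 (Real.sqrt_nonneg _)
  have h1 : frob ((((1/2 : ℝ) • (X * Xᵀ) - 1) * (Y - M) * X) * Nr r)
      ≤ (r : ℝ) * (s * Real.sqrt r) := by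
    calc frob ((((1/2 : ℝ) • (X * Xᵀ) - 1) * (Y - M) * X) * Nr r)
        ≤ (r : ℝ) * frob (((1/2 : ℝ) • (X * Xᵀ) - 1) * (Y - M) * X) := frob_mul_Nr _
      _ ≤ (r : ℝ) * (s * Real.sqrt r) := by
          apply mul_le_mul_of_nonneg_left _ (Nat.cast_nonneg r)
          rw [Matrix.mul_assoc]
          calc frob (((1/2 : ℝ) • (X * Xᵀ) - 1) * ((Y - M) * X))
              ≤ spec ((1/2 : ℝ) • (X * Xᵀ) - 1) * frob ((Y - M) * X) := frob_mul_le_spec _ _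
            _ ≤ 1 * (s * Real.sqrt r) :=
                mul_le_mul hQ hfX (frob_nonneg _) zero_le_one
            _ = s * Real.sqrt r := one_mul _
  have h2 : frob ((1/2 : ℝ) • ((X * Nr r * Xᵀ) * (Y - M) * X))
      ≤ (1/2 : ℝ) * ((r : ℝ) * (s * Real.sqrt r)) := by
    rw [frob_smul, abs_of_nonneg (by norm_num : (0:ℝ) ≤ 1/2)]
    apply mul_le_mul_of_nonneg_left _ (by norm_num : (0:ℝ) ≤ 1/2)
    rw [Matrix.mul_assoc]
    calc frob ((X * Nr r * Xᵀ) * ((Y - M) * X))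
        ≤ spec (X * Nr r * Xᵀ) * frob ((Y - M) * X) := frob_mul_le_spec _ _
      _ ≤ (r : ℝ) * (s * Real.sqrt r) :=
          mul_le_mul (spec_XNrXt_le X hX) hfX (frob_nonneg _) (Nat.cast_nonneg r)
  calc frob (gradRisk Y X - gradRisk M X)
      = frob ((((1/2 : ℝ) • (X * Xᵀ) - 1) * (Y - M) * X) * Nr r
        + (1/2 : ℝ) • ((X * Nr r * Xᵀ) * (Y - M) * X)) := by rw [hre]
    _ ≤ frob ((((1/2 : ℝ) • (X * Xᵀ) - 1) * (Y - M) * X) * Nr r)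
        + frob ((1/2 : ℝ) • ((X * Nr r * Xᵀ) * (Y - M) * X)) := frob_add_le _ _
    _ ≤ (r : ℝ) * (s * Real.sqrt r) + (1/2 : ℝ) * ((r : ℝ) * (s * Real.sqrt r)) :=
        add_le_add h1 h2
    _ = (3/2 : ℝ) * ((r : ℝ) * Real.sqrt r) * s := by ring
    _ = (3/2 : ℝ) * (r : ℝ) ^ ((3 : ℝ)/2) * s := by rw [rpow_three_halves]
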